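/- arXiv:1103.5861 — 2 statements merged into one kernel-verified Lean document; each statement's English description precedes it below -/
import Mathlib

section
/- Let r ≥ 1, let G = (g₁,…,g_r) be a system of polynomials with integer coefficients and F = (f₁,…,f_r) a system of arithmetical functions (f_i : ℕ → ℂ). Let m₁,…,m_r ∈ ℕ, m := lcm[m₁,…,m_r], and let M ∈ ℕ with m ∣ M. Then (1/φ(M)) · ∑_{1 ≤ k ≤ M, gcd(k,M)=1} f₁(gcd(g₁(k), m₁)) ⋯ f_r(gcd(g_r(k), m_r)) = ∑_{d₁ ∣ m₁, …, d_r ∣ m_r} [(μ∗f₁)(d₁) ⋯ (μ∗f_r)(d_r) / φ(lcm[d₁,…,d_r])] · η_G(d₁,…,d_r). In particular the left-hand side does not depend on the choice of M. -/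
open Finset

/-- Dirichlet convolution of the Möbius function with `f`. -/
noncomputable def muConv (f : ℕ → ℂ) (d : ℕ) : ℂ :=
  ∑ e ∈ d.divisors, (ArithmeticFunction.moebius e : ℂ) * f (d / e)

lemma sum_muConv (f : ℕ → ℂ) {n : ℕ} (hn : 0 < n) :
    ∑ d ∈ n.divisors, muConv f d = f n := by
  refine (ArithmeticFunction.sum_eq_iff_sum_smul_moebius_eq (f := muConv f) (g := f)).mpr ?_ n hn
  intro n hn
  rw [muConv, ← Nat.sum_divisorsAntidiagonal
    (fun a b => (ArithmeticFunction.moebius a : ℂ) * f b)]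
  simp [zsmul_eq_mul]

lemma divisors_int_gcd (a : ℤ) (m : ℕ) (hm : m ≠ 0) :
    (Int.gcd a m).divisors = m.divisors.filter (fun d : ℕ => (d:ℤ) ∣ a) := by
  ext e
  simp only [Nat.mem_divisors, Finset.mem_filter]
  constructor
  · rintro ⟨h1, _⟩
    have ha : (e:ℤ) ∣ a := dvd_trans (Int.natCast_dvd_natCast.mpr h1) (Int.gcd_dvd_left _ _)
    have hm' : e ∣ m := by
      have := dvd_trans (Int.natCast_dvd_natCast.mpr h1) (Int.gcd_dvd_right (a := a) (b := (m:ℤ)))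
      exact_mod_cast this
    exact ⟨⟨hm', hm⟩, ha⟩
  · rintro ⟨⟨h1, _⟩, h3⟩
    refine ⟨?_, ?_⟩
    · have : (e:ℤ) ∣ (Int.gcd a m : ℤ) := Int.dvd_coe_gcd h3 (Int.natCast_dvd_natCast.mpr h1)
      exact_mod_cast this
    · simp [Int.gcd_eq_zero_iff, hm]


lemma coprime_nat_lcm (k a b : ℕ) : Nat.Coprime k (Nat.lcm a b) ↔ Nat.Coprime k a ∧ Nat.Coprime k b := by
  constructor
  · intro h
    exact ⟨h.coprime_dvd_right (Nat.dvd_lcm_left a b), h.coprime_dvd_right (Nat.dvd_lcm_right a b)⟩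
  · rintro ⟨h1, h2⟩
    exact (h1.mul_right h2).coprime_dvd_right (Nat.lcm_dvd_mul a b)

lemma coprime_finset_lcm {ι : Type*} [DecidableEq ι] (s : Finset ι) (d : ι → ℕ) (k : ℕ) :
    Nat.Coprime k (s.lcm d) ↔ ∀ i ∈ s, Nat.Coprime k (d i) := by
  induction s using Finset.induction with
  | empty => simp [Nat.coprime_one_right]
  | insert _ _ h ih =>
    rw [Finset.lcm_insert]
    rw [show (lcm (d _) (Finset.lcm _ d) : ℕ) = Nat.lcm (d _) (Finset.lcm _ d) from rfl]
    rw [coprime_nat_lcm, ih]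
    simp


lemma card_isUnit_filter (L : ℕ) [NeZero L] :
    (Finset.univ.filter (fun b : ZMod L => IsUnit b)).card = Nat.totient L := by
  rw [← ZMod.card_units_eq_totient L]
  have h : (Finset.univ.filter (fun b : ZMod L => IsUnit b))
      = Finset.univ.image (fun β : (ZMod L)ˣ => (β : ZMod L)) := by
    ext b
    simp only [mem_filter, mem_univ, true_and, mem_image]
    exact ⟨fun h => ⟨h.unit, h.unit_spec⟩, fun ⟨u, hu⟩ => hu ▸ u.isUnit⟩
  rw [h, Finset.card_image_of_injective _ Units.val_injective, Fintype.card, card_univ]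

lemma fiber_card (L M : ℕ) (hL : 0 < L) (hM0 : 0 < M) (hLM : L ∣ M) (x : ℕ)
    (hx : Nat.Coprime x L) :
    Nat.totient L * ((range M).filter (fun k => Nat.gcd k M = 1 ∧ k % L = x % L)).card
      = Nat.totient M := by
  haveI : NeZero L := ⟨hL.ne'⟩
  haveI : NeZero M := ⟨hM0.ne'⟩
  set c : ZMod L → ℕ := fun b =>
    (Finset.univ.filter (fun a : ZMod M => IsUnit a ∧ ZMod.castHom hLM (ZMod L) a = b)).card
    with hc
  -- transfer nat count to ZMod count
  have hcard : ∀ b : ZMod L,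
      ((range M).filter (fun k => Nat.gcd k M = 1 ∧ (k : ZMod L) = b)).card = c b := by
    intro b
    simp only [hc]
    refine Finset.card_bij (fun k _ => (k : ZMod M)) ?_ ?_ ?_
    · intro k hk
      simp only [mem_filter, mem_range] at hk ⊢
      exact ⟨mem_univ _, (ZMod.isUnit_iff_coprime k M).mpr hk.2.1,
        by rw [map_natCast]; exact hk.2.2⟩
    · intro k1 h1 k2 h2 h
      simp only [mem_filter, mem_range] at h1 h2
      have := congrArg ZMod.val h
      rwa [ZMod.val_cast_of_lt h1.1, ZMod.val_cast_of_lt h2.1] at this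
    · intro a ha
      simp only [mem_filter, mem_univ, true_and] at ha
      refine ⟨a.val, ?_, ?_⟩
      · simp only [mem_filter, mem_range]
        refine ⟨ZMod.val_lt a, ?_, ?_⟩
        · have := ZMod.val_coe_unit_coprime ha.1.unit
          rwa [ha.1.unit_spec] at this
        · rw [← ha.2, ZMod.castHom_apply, ← ZMod.natCast_val]
      · exact ZMod.natCast_rightInverse a
  have hcast : ∀ v : (ZMod M)ˣ,
      ZMod.castHom hLM (ZMod L) (v : ZMod M) = ((ZMod.unitsMap hLM v : (ZMod L)ˣ) : ZMod L) :=
    fun v => rfl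
  have hequal : ∀ β γ : (ZMod L)ˣ, c (β : ZMod L) = c (γ : ZMod L) := by
    intro β γ
    obtain ⟨u, hu⟩ := ZMod.unitsMap_surjective hLM (γ * β⁻¹)
    simp only [hc]
    refine Finset.card_bij (fun a _ => (u : ZMod M) * a) ?_ ?_ ?_
    · intro a ha
      simp only [mem_filter, mem_univ, true_and] at ha ⊢
      refine ⟨u.isUnit.mul ha.1, ?_⟩
      rw [map_mul, ha.2, hcast u, hu, ← Units.val_mul, inv_mul_cancel_right]
    · intro a1 _ a2 _ h
      exact (Units.mul_right_inj u).mp h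
    · intro a ha
      simp only [mem_filter, mem_univ, true_and] at ha
      refine ⟨(u⁻¹ : (ZMod M)ˣ) * a, ?_, ?_⟩
      · simp only [mem_filter, mem_univ, true_and]
        refine ⟨(u⁻¹ : (ZMod M)ˣ).isUnit.mul ha.1, ?_⟩
        rw [map_mul, ha.2, hcast u⁻¹, map_inv, hu, ← Units.val_mul]
        congr 1
        group
      · show (u : ZMod M) * ((u⁻¹ : (ZMod M)ˣ) * a) = a
        rw [← mul_assoc, ← Units.val_mul, mul_inv_cancel, Units.val_one, one_mul]
  have hxu : IsUnit (x : ZMod L) := (ZMod.isUnit_iff_coprime x L).mpr hx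
  have hset : ((range M).filter (fun k => Nat.gcd k M = 1 ∧ k % L = x % L))
      = ((range M).filter (fun k => Nat.gcd k M = 1 ∧ (k : ZMod L) = (x : ZMod L))) := by
    apply Finset.filter_congr
    intro k _
    simp [ZMod.natCast_eq_natCast_iff']
  have hB : ∑ b ∈ Finset.univ.filter (fun b : ZMod L => IsUnit b), c b = Nat.totient M := by
    have hfib := Finset.card_eq_sum_card_fiberwise
      (f := fun a : ZMod M => ZMod.castHom hLM (ZMod L) a)
      (s := Finset.univ.filter (fun a : ZMod M => IsUnit a))
      (t := Finset.univ.filter (fun b : ZMod L => IsUnit b)) ?_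
    · rw [← card_isUnit_filter M, hfib]
      apply Finset.sum_congr rfl
      intro b _
      rw [hc, Finset.filter_filter]
    · intro a ha
      simp only [mem_coe, mem_filter, mem_univ, true_and] at ha ⊢
      exact ha.map (ZMod.castHom hLM (ZMod L))
  have hconst : ∀ b ∈ Finset.univ.filter (fun b : ZMod L => IsUnit b), c b = c ((x : ZMod L)) := by
    intro b hb
    rw [mem_filter] at hb
    have h1 := hequal hb.2.unit hxu.unit
    rwa [hb.2.unit_spec, hxu.unit_spec] at h1
  rw [Finset.sum_congr rfl hconst, Finset.sum_const, smul_eq_mul, card_isUnit_filter L] at hB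
  rw [hset, hcard]
  exact hB

lemma count_lemma (L M : ℕ) (hL : 0 < L) (hM0 : 0 < M) (hLM : L ∣ M)
    (P : ℕ → Prop) [DecidablePred P] (hP : ∀ a b : ℕ, a % L = b % L → P a → P b) :
    Nat.totient L * ((Finset.Icc 1 M).filter (fun k => Nat.gcd k M = 1 ∧ P k)).card
      = Nat.totient M * ((range L).filter (fun x => Nat.gcd x L = 1 ∧ P x)).card := by
  have hgcdmod : ∀ k : ℕ, Nat.gcd (k % M) M = Nat.gcd k M := by
    intro k
    conv_rhs => rw [Nat.gcd_comm, Nat.gcd_rec]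
  -- Icc → range
  have h1 : ((Finset.Icc 1 M).filter (fun k => Nat.gcd k M = 1 ∧ P k)).card
      = ((range M).filter (fun k => Nat.gcd k M = 1 ∧ P k)).card := by
    refine Finset.card_bij' (fun k _ => k % M) (fun x _ => if x = 0 then M else x) ?_ ?_ ?_ ?_
    · intro k hk
      simp only [mem_filter, mem_Icc, mem_range] at hk ⊢
      refine ⟨Nat.mod_lt _ hM0, by rw [hgcdmod]; exact hk.2.1, ?_⟩
      exact hP k (k % M) (Nat.mod_mod_of_dvd k hLM).symm hk.2.2
    · intro x hx
      simp only [mem_filter, mem_range] at hx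
      by_cases h0 : x = 0
      · subst h0
        have hM1 : M = 1 := by simpa using hx.2.1
        simp only [if_pos rfl, mem_filter, mem_Icc, hM1]
        have hL1 : L = 1 := Nat.dvd_one.mp (hM1 ▸ hLM)
        refine ⟨⟨le_refl 1, le_refl 1⟩, by norm_num, ?_⟩
        exact hP 0 1 (by simp [hL1]) hx.2.2
      · simp only [if_neg h0, mem_filter, mem_Icc]
        exact ⟨⟨Nat.one_le_iff_ne_zero.mpr h0, le_of_lt hx.1⟩, hx.2.1, hx.2.2⟩
    · intro k hk
      simp only [mem_filter, mem_Icc] at hk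
      show (if k % M = 0 then M else k % M) = k
      rcases lt_or_eq_of_le hk.1.2 with h | h
      · rw [Nat.mod_eq_of_lt h, if_neg (by omega)]
      · subst h
        simp
    · intro x hx
      simp only [mem_filter, mem_range] at hx
      show (if x = 0 then M else x) % M = x
      by_cases h0 : x = 0
      · subst h0; simp
      · rw [if_neg h0, Nat.mod_eq_of_lt hx.1]
  rw [h1]
  -- partition by residue mod L
  set t := (range L).filter (fun x => Nat.gcd x L = 1 ∧ P x) with ht
  have h2 : ((range M).filter (fun k => Nat.gcd k M = 1 ∧ P k)).card
      = ∑ x ∈ t, (((range M).filter (fun k => Nat.gcd k M = 1 ∧ P k)).filter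
          (fun k => k % L = x)).card := by
    apply Finset.card_eq_sum_card_fiberwise
    intro k hk
    simp only [mem_coe, mem_filter, mem_range, ht] at hk ⊢
    refine ⟨Nat.mod_lt _ hL, ?_, hP k (k % L) (Nat.mod_mod_of_dvd k (dvd_refl L)).symm hk.2.2⟩
    · have hco : Nat.Coprime k L := (Nat.Coprime.coprime_dvd_right hLM hk.2.1)
      have : Nat.gcd (k % L) L = Nat.gcd k L := by
        conv_rhs => rw [Nat.gcd_comm, Nat.gcd_rec]
      rw [this]; exact hco
  rw [h2, Finset.mul_sum]
  rw [Finset.sum_congr rfl (fun x hx => ?_), Finset.sum_const, smul_eq_mul, mul_comm]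
  -- per-class count
  simp only [ht, mem_filter, mem_range] at hx
  rw [Finset.filter_filter]
  have hfibeq : ((range M).filter (fun k => (Nat.gcd k M = 1 ∧ P k) ∧ k % L = x)).card
      = ((range M).filter (fun k => Nat.gcd k M = 1 ∧ k % L = x % L)).card := by
    congr 1
    apply Finset.filter_congr
    intro k _
    rw [Nat.mod_eq_of_lt hx.1]
    constructor
    · rintro ⟨⟨hg, _⟩, hm⟩; exact ⟨hg, hm⟩
    · rintro ⟨hg, hm⟩; exact ⟨⟨hg, hP x k (by rw [hm, Nat.mod_eq_of_lt hx.1]) hx.2.2⟩, hm⟩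
  rw [hfibeq]
  exact fiber_card L M hL hM0 hLM x hx.2.1

/-- `etaG g d` is the number of residues `x` modulo `lcm[d₁,…,d_r]` satisfying the
simultaneous congruences `gᵢ(x) ≡ 0 (mod dᵢ)` together with `gcd(x, dᵢ) = 1` for all `i`. -/
def etaG {r : ℕ} (g : Fin r → Polynomial ℤ) (d : Fin r → ℕ) : ℕ :=
  ((Finset.range (Finset.univ.lcm d)).filter
    (fun x : ℕ => (∀ i, (d i : ℤ) ∣ (g i).eval (x : ℤ)) ∧ ∀ i, Nat.gcd x (d i) = 1)).card

theorem stmt5 (r : ℕ) (hr : 1 ≤ r) (g : Fin r → Polynomial ℤ) (f : Fin r → ℕ → ℂ)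
    (m : Fin r → ℕ) (hm : ∀ i, 0 < m i) (M : ℕ) (hM0 : 0 < M)
    (hM : (Finset.univ.lcm m) ∣ M) :
    (1 / (Nat.totient M : ℂ)) *
        ∑ k ∈ (Finset.Icc 1 M).filter (fun k => Nat.gcd k M = 1),
          ∏ i, f i (Int.gcd ((g i).eval (k : ℤ)) (m i)) =
      ∑ d ∈ Fintype.piFinset (fun i => (m i).divisors),
        (∏ i, muConv (f i) (d i)) / ((Nat.totient (Finset.univ.lcm d) : ℕ) : ℂ) *
          (etaG g d : ℂ) := by
  classical
  have hMpos : 0 < Nat.totient M := Nat.totient_pos.mpr hM0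
  have step1 : ∀ k : ℕ,
      (∏ i, f i (Int.gcd ((g i).eval (k:ℤ)) (m i)))
        = ∑ d ∈ Fintype.piFinset (fun i => (m i).divisors),
            if (∀ i, (d i : ℤ) ∣ (g i).eval (k:ℤ)) then ∏ i, muConv (f i) (d i) else 0 := by
    intro k
    have h1 : ∀ i, f i (Int.gcd ((g i).eval (k:ℤ)) (m i))
        = ∑ dd ∈ (m i).divisors,
            (if (dd : ℤ) ∣ (g i).eval (k:ℤ) then muConv (f i) dd else 0) := by
      intro i
      rw [← Finset.sum_filter, ← divisors_int_gcd _ _ (hm i).ne']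
      refine (sum_muConv (f i) ?_).symm
      rw [Int.gcd_pos_iff]
      right
      exact_mod_cast (hm i).ne'
    rw [Finset.prod_congr rfl (fun i _ => h1 i), Finset.prod_univ_sum]
    apply Finset.sum_congr rfl
    intro d _
    by_cases hall : ∀ i, (d i : ℤ) ∣ (g i).eval (k:ℤ)
    · rw [if_pos hall]
      exact Finset.prod_congr rfl (fun i _ => if_pos (hall i))
    · rw [if_neg hall]
      push_neg at hall
      obtain ⟨i, hi⟩ := hall
      exact Finset.prod_eq_zero (mem_univ i) (if_neg hi)
  rw [Finset.sum_congr rfl (fun k _ => step1 k), Finset.sum_comm, Finset.mul_sum]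
  apply Finset.sum_congr rfl
  intro d hd
  simp only [Fintype.mem_piFinset, Nat.mem_divisors] at hd
  have hdM : ∀ i, d i ∣ M := fun i =>
    (hd i).1.trans ((Finset.dvd_lcm (mem_univ i)).trans hM)
  have hLM : Finset.univ.lcm d ∣ M := Finset.lcm_dvd (fun i _ => hdM i)
  have hL : 0 < Finset.univ.lcm d := Nat.pos_of_dvd_of_pos hLM hM0
  have hLpos : 0 < Nat.totient (Finset.univ.lcm d) := Nat.totient_pos.mpr hL
  rw [← Finset.sum_filter, Finset.sum_const, nsmul_eq_mul, Finset.filter_filter]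
  have hP : ∀ a b : ℕ, a % Finset.univ.lcm d = b % Finset.univ.lcm d →
      (∀ i, (d i : ℤ) ∣ (g i).eval (a:ℤ)) → (∀ i, (d i : ℤ) ∣ (g i).eval (b:ℤ)) := by
    intro a b hab hPa i
    have hdvdL : (d i : ℤ) ∣ ((Finset.univ.lcm d : ℕ) : ℤ) :=
      Int.natCast_dvd_natCast.mpr (Finset.dvd_lcm (f := d) (mem_univ i))
    have hmod : (a : ℤ) % ((Finset.univ.lcm d : ℕ) : ℤ) = (b : ℤ) % ((Finset.univ.lcm d : ℕ) : ℤ) := by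
      rw [← Int.natCast_mod, ← Int.natCast_mod, hab]
    have h1 : ((Finset.univ.lcm d : ℕ) : ℤ) ∣ (b : ℤ) - (a : ℤ) := Int.ModEq.dvd hmod
    have h2 : (d i : ℤ) ∣ (g i).eval (b:ℤ) - (g i).eval (a:ℤ) :=
      (hdvdL.trans h1).trans (Polynomial.sub_dvd_eval_sub _ _ _)
    have := dvd_add h2 (hPa i)
    simpa using this
  have hcount := count_lemma (Finset.univ.lcm d) M hL hM0 hLM
    (fun k => ∀ i, (d i : ℤ) ∣ (g i).eval (k:ℤ)) hP
  have heta : ((range (Finset.univ.lcm d)).filter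
      (fun x => Nat.gcd x (Finset.univ.lcm d) = 1 ∧
        ∀ i, (d i : ℤ) ∣ (g i).eval (x:ℤ))).card = etaG g d := by
    rw [etaG]
    congr 1
    apply Finset.filter_congr
    intro x _
    constructor
    · rintro ⟨hg, hdvd⟩
      exact ⟨hdvd, fun i => Nat.Coprime.coprime_dvd_right (Finset.dvd_lcm (mem_univ i)) hg⟩
    · rintro ⟨hdvd, hg⟩
      exact ⟨(coprime_finset_lcm univ d x).mpr (fun i _ => hg i), hdvd⟩
  rw [heta] at hcount
  have hC : (Nat.totient (Finset.univ.lcm d) : ℂ) *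
      (((Finset.Icc 1 M).filter (fun k => Nat.gcd k M = 1 ∧
        ∀ i, (d i:ℤ) ∣ (g i).eval (k:ℤ))).card : ℂ)
      = (Nat.totient M : ℂ) * (etaG g d : ℂ) := by
    exact_mod_cast congrArg (Nat.cast : ℕ → ℂ) hcount
  have hM0' : (Nat.totient M : ℂ) ≠ 0 := Nat.cast_ne_zero.mpr hMpos.ne'
  have hL0' : (Nat.totient (Finset.univ.lcm d) : ℂ) ≠ 0 := Nat.cast_ne_zero.mpr hLpos.ne'
  field_simp
  linear_combination (∏ i, muConv (f i) (d i)) * hC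
end

section
/- Let r ≥ 1, let a₁,…,a_r ∈ ℤ, let t₁,…,t_r be nonnegative integers, let m₁,…,m_r ∈ ℕ, m := lcm[m₁,…,m_r], and M ∈ ℕ with m ∣ M. Then (1/φ(M)) · ∑_{1 ≤ k ≤ M, gcd(k,M)=1} gcd(k − a₁, m₁)^{t₁} ⋯ gcd(k − a_r, m_r)^{t_r} = ∑_{d₁ ∣ m₁, …, d_r ∣ m_r} [φ_{t₁}(d₁) ⋯ φ_{t_r}(d_r) / φ(lcm[d₁,…,d_r])] · η^{(a)}(d₁,…,d_r), where η^{(a)}(d₁,…,d_r) = 1 if gcd(d_i, a_i) = 1 for 1 ≤ i ≤ r and gcd(d_i, d_j) ∣ a_i − a_j for 1 ≤ i, j ≤ r, and η^{(a)}(d₁,…,d_r) = 0 otherwise. -/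
open Finset

/-- The Jordan-type function `φ_t = μ ∗ id_t`, i.e.
`φ_t(n) = ∑_{e ∣ n} μ(e) (n/e)^t = n^t ∏_{p ∣ n} (1 - 1/p^t)`. -/
noncomputable def jordanPhi (t : ℕ) (n : ℕ) : ℂ :=
  ∑ e ∈ n.divisors, (ArithmeticFunction.moebius e : ℂ) * ((n / e : ℕ) : ℂ) ^ t

open ArithmeticFunction

lemma jordanPhi_eq (t : ℕ) (n : ℕ) :
    jordanPhi t n = (((moebius : ArithmeticFunction ℤ) : ArithmeticFunction ℂ) *
      ((pow t : ArithmeticFunction ℕ) : ArithmeticFunction ℂ)) n := by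
  rcases eq_or_ne n 0 with rfl | hn
  · simp [jordanPhi]
  · rw [mul_apply, Nat.sum_divisorsAntidiagonal
      (fun e c => ((moebius : ArithmeticFunction ℤ) : ArithmeticFunction ℂ) e *
        ((pow t : ArithmeticFunction ℕ) : ArithmeticFunction ℂ) c)]
    apply Finset.sum_congr rfl
    intro e he
    have he' : n / e ≠ 0 := (Nat.div_pos
      (Nat.le_of_dvd (Nat.pos_of_ne_zero hn) (Nat.mem_divisors.mp he).1)
      (Nat.pos_of_mem_divisors he)).ne'
    simp [natCoe_apply, intCoe_apply, pow_apply, he']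

lemma sum_jordanPhi (t : ℕ) {n : ℕ} (hn : n ≠ 0) :
    ∑ d ∈ n.divisors, jordanPhi t d = ((n : ℂ)) ^ t := by
  have : ∑ d ∈ n.divisors, jordanPhi t d =
      ((((moebius : ArithmeticFunction ℤ) : ArithmeticFunction ℂ) *
      ((pow t : ArithmeticFunction ℕ) : ArithmeticFunction ℂ)) * zeta) n := by
    rw [coe_mul_zeta_apply]
    exact Finset.sum_congr rfl fun d _ => jordanPhi_eq t d
  rw [this, mul_comm _ (zeta : ArithmeticFunction ℂ), ← mul_assoc]
  rw [show ((zeta : ArithmeticFunction ℂ) * ((moebius : ArithmeticFunction ℤ) : ArithmeticFunction ℂ)) = 1 from coe_zeta_mul_coe_moebius]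
  rw [one_mul, natCoe_apply, pow_apply]
  simp [hn]

lemma fiber_card_mul {G H : Type*} [Group G] [Fintype G] [Group H] [Fintype H]
    [DecidableEq H] (f : G →* H) (hf : Function.Surjective f) (y : H) :
    (Finset.univ.filter (fun g => f g = y)).card * Fintype.card H = Fintype.card G := by
  classical
  have h1 : ∀ y' : H, (Finset.univ.filter (fun g => f g = y')).card
      = (Finset.univ.filter (fun g => f g = y)).card :=
    fun y' => MonoidHom.card_fiber_eq_of_mem_range f (hf y') (hf y)
  have h2 : (Finset.univ : Finset G).card
      = ∑ y' : H, (Finset.univ.filter (fun g => f g = y')).card :=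
    Finset.card_eq_sum_card_fiberwise (fun x _ => Finset.mem_univ (f x))
  rw [Finset.card_univ] at h2
  rw [h2]
  simp only [h1]
  rw [Finset.sum_const, Finset.card_univ, smul_eq_mul, mul_comm]

lemma count_res {M D : ℕ} (hD : D ∣ M) (hM0 : M ≠ 0) (b : ℤ)
    (hb : Int.gcd b D = 1) :
    ((Finset.Icc 1 M).filter (fun k => Nat.gcd k M = 1 ∧ (D:ℤ) ∣ (k:ℤ) - b)).card
      * Nat.totient D = Nat.totient M := by
  classical
  haveI : NeZero M := ⟨hM0⟩
  have hD0 : D ≠ 0 := fun h => hM0 (zero_dvd_iff.mp (h ▸ hD))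
  haveI : NeZero D := ⟨hD0⟩
  rcases eq_or_lt_of_le (Nat.one_le_iff_ne_zero.mpr hM0) with h1 | hM1
  · -- M = 1
    have hD1 : D = 1 := Nat.dvd_one.mp (h1 ▸ hD)
    subst hD1
    rw [← h1]
    norm_num
  haveI : Fact (1 < M) := ⟨hM1⟩
  -- `b` is a unit mod `D`
  have hbu : IsUnit ((b : ZMod D)) := by
    have h1 : IsUnit ((b.natAbs : ZMod D)) :=
      (ZMod.isUnit_iff_coprime _ _).mpr (by
        have h2 : Int.gcd b D = Nat.gcd b.natAbs D := by
          simp [Int.gcd]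
        rwa [h2] at hb)
    rcases Int.natAbs_eq b with h | h
    · rw [h, Int.cast_natCast]; exact h1
    · rw [h, Int.cast_neg, Int.cast_natCast]; exact h1.neg
  set y : (ZMod D)ˣ := hbu.unit with hy
  have hyv : (y : ZMod D) = (b : ZMod D) := hbu.unit_spec
  set f := ZMod.unitsMap hD with hf
  have hlt : ∀ k ∈ (Finset.Icc 1 M).filter
      (fun k => Nat.gcd k M = 1 ∧ (D:ℤ) ∣ (k:ℤ) - b), k < M := by
    intro k hk
    simp only [Finset.mem_filter, Finset.mem_Icc] at hk
    rcases lt_or_eq_of_le hk.1.2 with h | h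
    · exact h
    · exfalso; rw [h] at hk
      rw [Nat.gcd_self] at hk
      omega
  have hcast : ∀ k : ℕ, ((ZMod.castHom hD (ZMod D)) ((k : ZMod M)) = (b : ZMod D))
      ↔ (D:ℤ) ∣ (k:ℤ) - b := by
    intro k
    rw [map_natCast, show ((k:ℕ) : ZMod D) = ((k:ℤ) : ZMod D) by push_cast; rfl,
      ZMod.intCast_eq_intCast_iff, Int.modEq_iff_dvd]
    exact dvd_sub_comm
  have hcard : (((Finset.Icc 1 M).filter
      (fun k => Nat.gcd k M = 1 ∧ (D:ℤ) ∣ (k:ℤ) - b)).card)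
      = (Finset.univ.filter (fun u : (ZMod M)ˣ => f u = y)).card := by
    apply Finset.card_bij (fun k hk => ZMod.unitOfCoprime k (by
      simp only [Finset.mem_filter] at hk; exact hk.2.1))
    · intro k hk
      have hk' := hk
      simp only [Finset.mem_filter] at hk'
      simp only [Finset.mem_filter]
      refine ⟨Finset.mem_univ _, ?_⟩
      apply Units.ext
      rw [hyv]
      show (ZMod.castHom hD (ZMod D)) ((ZMod.unitOfCoprime k _ : (ZMod M)ˣ) : ZMod M) = _
      rw [ZMod.coe_unitOfCoprime]
      exact (hcast k).mpr hk'.2.2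
    · intro k1 hk1 k2 hk2 heq
      have h1 := hlt k1 hk1
      have h2 := hlt k2 hk2
      have := congrArg (fun u : (ZMod M)ˣ => (u : ZMod M)) heq
      simp only [ZMod.coe_unitOfCoprime] at this
      have := (ZMod.natCast_eq_natCast_iff _ _ _).mp this
      unfold Nat.ModEq at this
      rwa [Nat.mod_eq_of_lt h1, Nat.mod_eq_of_lt h2] at this
    · intro u hu
      simp only [Finset.mem_filter, Finset.mem_univ, true_and] at hu
      set v := (u : ZMod M).val with hv
      have hvc : Nat.Coprime v M := ZMod.val_coe_unit_coprime u
      have hv0 : v ≠ 0 := by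
        intro h0
        have : (u : ZMod M) = 0 := by
          rwa [← ZMod.val_eq_zero]
        have h01 : (0 : ZMod M) = 1 := isUnit_zero_iff.mp (this ▸ u.isUnit)
        exact zero_ne_one h01
      have hvM : v < M := ZMod.val_lt _
      have hvz : ((v : ℕ) : ZMod M) = (u : ZMod M) := ZMod.natCast_zmod_val _
      refine ⟨v, ?_, ?_⟩
      · simp only [Finset.mem_filter, Finset.mem_Icc]
        refine ⟨⟨Nat.one_le_iff_ne_zero.mpr hv0, hvM.le⟩, hvc, ?_⟩
        rw [← hcast v, hvz]
        have := congrArg (fun w : (ZMod D)ˣ => (w : ZMod D)) hu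
        rw [hyv] at this
        exact this
      · apply Units.ext
        rw [ZMod.coe_unitOfCoprime]
        exact hvz
  rw [hcard, ← ZMod.card_units_eq_totient M, ← ZMod.card_units_eq_totient D]
  exact fiber_card_mul f (ZMod.unitsMap_surjective hD) y

lemma int_crt2 (d e : ℕ) (x y : ℤ) (h : (Nat.gcd d e : ℤ) ∣ x - y) :
    ∃ c : ℤ, (d:ℤ) ∣ c - x ∧ (e:ℤ) ∣ c - y := by
  obtain ⟨w, hw⟩ := h
  have hg : (Nat.gcd d e : ℤ) = (d:ℤ) * Int.gcdA d e + (e:ℤ) * Int.gcdB d e := by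
    have := Int.gcd_eq_gcd_ab (d:ℤ) (e:ℤ)
    simpa [Int.gcd_natCast_natCast] using this
  refine ⟨x - (d:ℤ) * Int.gcdA d e * w, ⟨-(Int.gcdA d e * w), by ring⟩, ⟨Int.gcdB d e * w, ?_⟩⟩
  have : x - y = ((d:ℤ) * Int.gcdA d e + (e:ℤ) * Int.gcdB d e) * w := by rw [← hg]; exact hw
  linear_combination this

lemma gcd_lcm_dvd' (c a b : ℕ) (hc : c ≠ 0) (ha : a ≠ 0) (hb : b ≠ 0) :
    Nat.gcd c (Nat.lcm a b) ∣ Nat.lcm (Nat.gcd c a) (Nat.gcd c b) := by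
  have h1 : Nat.lcm a b ≠ 0 := Nat.lcm_ne_zero ha hb
  have hga : Nat.gcd c a ≠ 0 := Nat.gcd_ne_zero_left hc
  have hgb : Nat.gcd c b ≠ 0 := Nat.gcd_ne_zero_left hc
  rw [← Nat.factorization_le_iff_dvd (Nat.gcd_ne_zero_left hc) (Nat.lcm_ne_zero hga hgb)]
  rw [Nat.factorization_gcd hc h1, Nat.factorization_lcm ha hb,
    Nat.factorization_lcm hga hgb, Nat.factorization_gcd hc ha, Nat.factorization_gcd hc hb]
  intro p
  simp only [Finsupp.inf_apply, Finsupp.sup_apply]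
  omega

lemma gcd_finset_lcm_dvd {ι : Type*} [DecidableEq ι] (s : Finset ι) (c : ℕ) (hc : c ≠ 0)
    (d : ι → ℕ) (hd : ∀ i ∈ s, d i ≠ 0) :
    Nat.gcd c (s.lcm d) ∣ s.lcm (fun j => Nat.gcd c (d j)) := by
  induction s using Finset.induction with
  | empty => simp
  | @insert i₀ s hi₀ ih =>
    rw [Finset.lcm_insert, Finset.lcm_insert]
    have hlne : s.lcm d ≠ 0 := by
      simp only [Ne, Finset.lcm_eq_zero_iff]
      rintro ⟨x, hx, hx0⟩
      exact hd x (Finset.mem_insert_of_mem hx) hx0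
    have step := gcd_lcm_dvd' c (d i₀) (s.lcm d) hc (hd i₀ (Finset.mem_insert_self _ _)) hlne
    rw [lcm_eq_nat_lcm]
    refine step.trans ?_
    rw [← lcm_eq_nat_lcm]
    exact lcm_dvd_lcm dvd_rfl (ih (fun i hi => hd i (Finset.mem_insert_of_mem hi)))

lemma crt_finset {ι : Type*} [DecidableEq ι] (s : Finset ι) (d : ι → ℕ)
    (hd : ∀ i ∈ s, d i ≠ 0) (a : ι → ℤ)
    (h : ∀ i ∈ s, ∀ j ∈ s, (Nat.gcd (d i) (d j) : ℤ) ∣ a i - a j) :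
    ∃ b : ℤ, ∀ i ∈ s, (d i : ℤ) ∣ b - a i := by
  induction s using Finset.induction with
  | empty => exact ⟨0, by simp⟩
  | @insert i₀ s hi₀ ih =>
    obtain ⟨b, hb⟩ := ih (fun i hi => hd i (Finset.mem_insert_of_mem hi))
      (fun i hi j hj => h i (Finset.mem_insert_of_mem hi) j (Finset.mem_insert_of_mem hj))
    have h2 : ∀ j ∈ s, (Nat.gcd (d i₀) (d j) : ℤ) ∣ a i₀ - b := by
      intro j hj
      have ha1 : (Nat.gcd (d i₀) (d j) : ℤ) ∣ a i₀ - a j :=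
        h i₀ (Finset.mem_insert_self _ _) j (Finset.mem_insert_of_mem hj)
      have ha2 : (Nat.gcd (d i₀) (d j) : ℤ) ∣ b - a j :=
        dvd_trans (Int.natCast_dvd_natCast.mpr (Nat.gcd_dvd_right _ _)) (hb j hj)
      have := dvd_sub ha1 ha2
      simpa using this
    have h4 : ((s.lcm (fun j => Nat.gcd (d i₀) (d j)) : ℕ) : ℤ) ∣ a i₀ - b := by
      rw [Int.natCast_dvd]
      exact Finset.lcm_dvd fun j hj => Int.natCast_dvd.mp (h2 j hj)
    have hcompat : (Nat.gcd (d i₀) (s.lcm d) : ℤ) ∣ a i₀ - b :=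
      dvd_trans (Int.natCast_dvd_natCast.mpr (gcd_finset_lcm_dvd s (d i₀)
        (hd i₀ (Finset.mem_insert_self _ _)) d
        (fun i hi => hd i (Finset.mem_insert_of_mem hi)))) h4
    obtain ⟨c, hc1, hc2⟩ := int_crt2 (d i₀) (s.lcm d) (a i₀) b hcompat
    refine ⟨c, fun i hi => ?_⟩
    rcases Finset.mem_insert.mp hi with rfl | hi
    · exact hc1
    · have hdiv : (d i : ℤ) ∣ c - b :=
        dvd_trans (Int.natCast_dvd_natCast.mpr (Finset.dvd_lcm hi)) hc2
      have := dvd_add hdiv (hb i hi)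
      simpa using this

lemma coprime_finset_lcm_iff {ι : Type*} [DecidableEq ι] (s : Finset ι) (d : ι → ℕ) (b : ℕ) :
    Nat.Coprime b (s.lcm d) ↔ ∀ i ∈ s, Nat.Coprime b (d i) := by
  constructor
  · intro h i hi
    exact Nat.Coprime.coprime_dvd_right (Finset.dvd_lcm hi) h
  · intro h
    induction s using Finset.induction with
    | empty => simp [Nat.coprime_one_right]
    | @insert i₀ s hi₀ ih =>
      rw [Finset.lcm_insert]
      have h1 : Nat.Coprime b (d i₀ * s.lcm d) :=
        Nat.Coprime.mul_right (h i₀ (Finset.mem_insert_self _ _))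
          (ih (fun i hi => h i (Finset.mem_insert_of_mem hi)))
      rw [lcm_eq_nat_lcm]
      exact Nat.Coprime.coprime_dvd_right (Nat.lcm_dvd_mul _ _) h1

lemma gcd_shift {d : ℕ} {x y : ℤ} (h : (d:ℤ) ∣ x - y) : Int.gcd x d = Int.gcd y d := by
  apply Nat.dvd_antisymm
  · apply Int.natCast_dvd_natCast.mp
    apply Int.dvd_coe_gcd
    · have h1 : (Int.gcd x d : ℤ) ∣ x := (Int.gcd_dvd_left _ _)
      have h2 : (Int.gcd x d : ℤ) ∣ x - y := dvd_trans (Int.gcd_dvd_right _ _) h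
      simpa using dvd_sub h1 h2
    · exact (Int.gcd_dvd_right _ _)
  · apply Int.natCast_dvd_natCast.mp
    apply Int.dvd_coe_gcd
    · have h1 : (Int.gcd y d : ℤ) ∣ y := (Int.gcd_dvd_left _ _)
      have h2 : (Int.gcd y d : ℤ) ∣ x - y := dvd_trans (Int.gcd_dvd_right _ _) h
      simpa using dvd_add h2 h1
    · exact (Int.gcd_dvd_right _ _)

/-- `etaA a d = 1` if `gcd(dᵢ, aᵢ) = 1` for all `i` and `gcd(dᵢ, dⱼ) ∣ aᵢ - aⱼ`
for all `i, j`, and `0` otherwise. -/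
def etaA {r : ℕ} (a : Fin r → ℤ) (d : Fin r → ℕ) : ℕ :=
  if (∀ i, Int.gcd (a i) (d i) = 1) ∧
      (∀ i j, ((Nat.gcd (d i) (d j) : ℤ)) ∣ (a i - a j)) then 1 else 0

lemma count_main {r : ℕ} (a : Fin r → ℤ) (d : Fin r → ℕ) (hd : ∀ i, d i ≠ 0)
    (M : ℕ) (hM0 : M ≠ 0) (hDM : Finset.univ.lcm d ∣ M) :
    (((Finset.Icc 1 M).filter
      (fun k => Nat.gcd k M = 1 ∧ ∀ i, (d i:ℤ) ∣ (k:ℤ) - a i)).card : ℕ)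
      * Nat.totient (Finset.univ.lcm d) = Nat.totient M * etaA a d := by
  classical
  set D := Finset.univ.lcm d with hDdef
  by_cases hcompat : ∀ i j, (Nat.gcd (d i) (d j) : ℤ) ∣ a i - a j
  · obtain ⟨b, hb⟩ := crt_finset Finset.univ d (fun i _ => hd i) a
      (fun i _ j _ => hcompat i j)
    have hb' : ∀ i, (d i:ℤ) ∣ b - a i := fun i => hb i (Finset.mem_univ i)
    have hequiv : ∀ k : ℤ, (∀ i, (d i:ℤ) ∣ k - a i) ↔ (D:ℤ) ∣ k - b := by
      intro k
      constructor
      · intro h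
        rw [Int.natCast_dvd]
        apply Finset.lcm_dvd
        intro i _
        rw [← Int.natCast_dvd]
        have := dvd_sub (h i) (hb' i)
        simpa using this
      · intro h i
        have h1 : (d i:ℤ) ∣ k - b :=
          dvd_trans (Int.natCast_dvd_natCast.mpr (Finset.dvd_lcm (Finset.mem_univ i))) h
        have := dvd_add h1 (hb' i)
        simpa using this
    have hfilter :
        (Finset.Icc 1 M).filter (fun k => Nat.gcd k M = 1 ∧ ∀ i, (d i:ℤ) ∣ (k:ℤ) - a i)
          = (Finset.Icc 1 M).filter (fun k => Nat.gcd k M = 1 ∧ (D:ℤ) ∣ (k:ℤ) - b) := by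
      apply Finset.filter_congr
      intro k _
      exact and_congr_right fun _ => hequiv (k:ℤ)
    rw [hfilter]
    by_cases hcop : ∀ i, Int.gcd (a i) (d i) = 1
    · have hbd : ∀ i, Int.gcd b (d i) = 1 := fun i => by
        rw [gcd_shift (hb' i)]; exact hcop i
      have hbD : Int.gcd b D = 1 := by
        have h1 : Nat.Coprime b.natAbs D :=
          (coprime_finset_lcm_iff Finset.univ d b.natAbs).mpr
            (fun i _ => by have := hbd i; simpa [Int.gcd] using this)
        simpa [Int.gcd] using h1
      have heta : etaA a d = 1 := by rw [etaA, if_pos ⟨hcop, hcompat⟩]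
      rw [heta, mul_one]
      exact count_res hDM hM0 b hbD
    · have heta : etaA a d = 0 := by
        rw [etaA, if_neg]; rintro ⟨h1, _⟩; exact hcop h1
      rw [heta, Nat.mul_zero]
      have hempty : (Finset.Icc 1 M).filter
          (fun k => Nat.gcd k M = 1 ∧ (D:ℤ) ∣ (k:ℤ) - b) = ∅ := by
        rw [Finset.filter_eq_empty_iff]
        rintro k hk ⟨hk1, hk2⟩
        apply hcop
        intro i
        have h1 : Nat.Coprime k (d i) := Nat.Coprime.coprime_dvd_right
          (dvd_trans (Finset.dvd_lcm (Finset.mem_univ i)) hDM) hk1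
        have h2 : (d i : ℤ) ∣ (k:ℤ) - a i := (hequiv (k:ℤ)).mpr hk2 i
        have h3 := gcd_shift h2
        rw [← h3]
        simpa [Int.gcd] using h1
      rw [hempty]
      simp
  · have heta : etaA a d = 0 := by
      rw [etaA, if_neg]; rintro ⟨_, h2⟩; exact hcompat h2
    rw [heta, Nat.mul_zero]
    have hempty : (Finset.Icc 1 M).filter
        (fun k => Nat.gcd k M = 1 ∧ ∀ i, (d i:ℤ) ∣ (k:ℤ) - a i) = ∅ := by
      rw [Finset.filter_eq_empty_iff]
      rintro k hk ⟨hk1, hk2⟩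
      apply hcompat
      intro i j
      have h1 : (Nat.gcd (d i) (d j) : ℤ) ∣ (k:ℤ) - a i :=
        dvd_trans (Int.natCast_dvd_natCast.mpr (Nat.gcd_dvd_left _ _)) (hk2 i)
      have h2 : (Nat.gcd (d i) (d j) : ℤ) ∣ (k:ℤ) - a j :=
        dvd_trans (Int.natCast_dvd_natCast.mpr (Nat.gcd_dvd_right _ _)) (hk2 j)
      have := dvd_sub h2 h1
      simpa using this
    rw [hempty]
    simp

lemma gcd_pow_expand (t : ℕ) (x : ℤ) {n : ℕ} (hn : n ≠ 0) :
    ((Int.gcd x n : ℕ) : ℂ)^t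
      = ∑ e ∈ n.divisors, (if (e:ℤ) ∣ x then jordanPhi t e else 0) := by
  have hg : Int.gcd x n ≠ 0 := by
    rw [Ne, Int.gcd_eq_zero_iff]
    rintro ⟨-, h2⟩
    exact hn (by exact_mod_cast h2)
  rw [← sum_jordanPhi t hg, ← Finset.sum_filter]
  apply Finset.sum_congr _ (fun _ _ => rfl)
  ext e
  simp only [Nat.mem_divisors, Finset.mem_filter]
  constructor
  · rintro ⟨he, -⟩
    have h1 : (e:ℤ) ∣ x :=
      dvd_trans (Int.natCast_dvd_natCast.mpr he) (Int.gcd_dvd_left _ _)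
    have h2 : e ∣ n := Nat.dvd_trans he (by
      have := Int.gcd_dvd_right (a := x) (b := (n:ℤ))
      exact_mod_cast this)
    exact ⟨⟨h2, hn⟩, h1⟩
  · rintro ⟨⟨he, -⟩, hx⟩
    refine ⟨?_, hg⟩
    have : (e:ℤ) ∣ (Int.gcd x n : ℤ) := Int.dvd_coe_gcd hx (by exact_mod_cast he)
    exact_mod_cast this

theorem stmt10 (r : ℕ) (hr : 1 ≤ r) (a : Fin r → ℤ) (t : Fin r → ℕ)
    (m : Fin r → ℕ) (hm : ∀ i, 0 < m i) (M : ℕ) (hM0 : 0 < M)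
    (hM : (Finset.univ.lcm m) ∣ M) :
    (1 / (Nat.totient M : ℂ)) *
        ∑ k ∈ (Finset.Icc 1 M).filter (fun k => Nat.gcd k M = 1),
          ∏ i, ((Int.gcd ((k : ℤ) - a i) (m i) : ℕ) : ℂ) ^ (t i) =
      ∑ d ∈ Fintype.piFinset (fun i => (m i).divisors),
        (∏ i, jordanPhi (t i) (d i)) / (Nat.totient (Finset.univ.lcm d) : ℂ) *
          (etaA a d : ℂ) := by
  classical
  have hMne : M ≠ 0 := hM0.ne'
  have hφM : (Nat.totient M : ℂ) ≠ 0 := by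
    exact_mod_cast (Nat.totient_pos.mpr hM0).ne'
  -- Step 1: expand each gcd power
  have step1 : ∀ k : ℕ,
      (∏ i, ((Int.gcd ((k : ℤ) - a i) (m i) : ℕ) : ℂ) ^ (t i))
        = ∑ d ∈ Fintype.piFinset (fun i => (m i).divisors),
            (if ∀ i, (d i : ℤ) ∣ (k:ℤ) - a i then ∏ i, jordanPhi (t i) (d i) else 0) := by
    intro k
    have : ∀ i : Fin r, ((Int.gcd ((k : ℤ) - a i) (m i) : ℕ) : ℂ) ^ (t i)
        = ∑ e ∈ (m i).divisors, (if (e:ℤ) ∣ (k:ℤ) - a i then jordanPhi (t i) e else 0) :=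
      fun i => gcd_pow_expand (t i) _ (hm i).ne'
    rw [Finset.prod_congr rfl (fun i _ => this i), Finset.prod_univ_sum]
    apply Finset.sum_congr rfl
    intro d _
    rw [Fintype.prod_ite_zero]
    congr 1
  rw [Finset.sum_congr rfl (fun k _ => step1 k), Finset.sum_comm]
  -- Step 2: inner sums are counts
  have step2 : ∀ d ∈ Fintype.piFinset (fun i => (m i).divisors),
      (∑ k ∈ (Finset.Icc 1 M).filter (fun k => Nat.gcd k M = 1),
        (if ∀ i, (d i : ℤ) ∣ (k:ℤ) - a i then ∏ i, jordanPhi (t i) (d i) else 0))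
      = (Nat.totient M : ℂ) *
          ((∏ i, jordanPhi (t i) (d i)) / (Nat.totient (Finset.univ.lcm d) : ℂ) *
            (etaA a d : ℂ)) := by
    intro d hd
    have hdne : ∀ i, d i ≠ 0 := by
      intro i
      have := (Fintype.mem_piFinset.mp hd) i
      exact (Nat.pos_of_mem_divisors this).ne'
    have hddvd : Finset.univ.lcm d ∣ M := by
      refine dvd_trans (Finset.lcm_dvd ?_) hM
      intro i _
      exact dvd_trans (Nat.mem_divisors.mp ((Fintype.mem_piFinset.mp hd) i)).1
        (Finset.dvd_lcm (Finset.mem_univ i))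
    have hlcm0 : Finset.univ.lcm d ≠ 0 := by
      intro h
      exact hMne (zero_dvd_iff.mp (h ▸ hddvd))
    have hφD : (Nat.totient (Finset.univ.lcm d) : ℂ) ≠ 0 := by
      exact_mod_cast (Nat.totient_pos.mpr (Nat.pos_of_ne_zero hlcm0)).ne'
    rw [← Finset.sum_filter, Finset.filter_filter, Finset.sum_const, nsmul_eq_mul]
    have hcount := count_main a d hdne M hMne hddvd
    -- cast to ℂ
    have hcountC : ((((Finset.Icc 1 M).filter
        (fun k => Nat.gcd k M = 1 ∧ ∀ i, (d i:ℤ) ∣ (k:ℤ) - a i)).card : ℂ))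
        * (Nat.totient (Finset.univ.lcm d) : ℂ)
        = (Nat.totient M : ℂ) * (etaA a d : ℂ) := by
      exact_mod_cast congrArg (fun n : ℕ => (n : ℂ)) hcount
    field_simp
    rw [mul_comm ((Finset.filter _ _).card : ℂ) _, mul_assoc]
    rw [hcountC]
    ring
  rw [Finset.sum_congr rfl step2, ← Finset.mul_sum]
  rw [← mul_assoc, one_div, inv_mul_cancel₀ hφM, one_mul]
end
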